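/- For every n ≥ 2, the TDC-stability of the friendship graph F_n equals 1. -/

import Mathlib

open SimpleGraph

/-- A total dominator coloring with `k` colors: a proper coloring in which every
vertex is adjacent to all vertices of some nonempty color class. -/
def IsTDColoring {V : Type*} (G : SimpleGraph V) {k : ℕ} (c : V → Fin k) : Prop :=
  (∀ u v, G.Adj u v → c u ≠ c v) ∧
  ∀ v : V, ∃ i : Fin k, (∃ w, c w = i) ∧ ∀ w, c w = i → G.Adj v w

/-- The total dominator chromatic number. -/
noncomputable def tdChromatic {V : Type*} (G : SimpleGraph V) : ℕ :=
  sInf {k | ∃ c : V → Fin k, IsTDColoring G c}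

/-- TDC-stability: minimum number of vertices whose removal changes the TDC-number. -/
noncomputable def tdStability {V : Type*} [Fintype V] (G : SimpleGraph V) : ℕ :=
  sInf {k | ∃ S : Finset V, S.card = k ∧ 0 < k ∧
    tdChromatic (G.induce {v | v ∉ S}) ≠ tdChromatic G}

/-- TDC-bondage number: minimum number of edges whose removal changes the TDC-number. -/
noncomputable def tdBondage {V : Type*} [Fintype V] (G : SimpleGraph V) : ℕ :=
  sInf {k | ∃ F : Finset (Sym2 V), ↑F ⊆ G.edgeSet ∧ F.card = k ∧ 0 < k ∧
    tdChromatic (G.deleteEdges ↑F) ≠ tdChromatic G}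

/-- The neighbourhood corona `G₁ ⋆ G₂`. -/
def ncorona {V₁ V₂ : Type*} (G₁ : SimpleGraph V₁) (G₂ : SimpleGraph V₂) :
    SimpleGraph (V₁ ⊕ V₁ × V₂) :=
  SimpleGraph.fromRel (fun u v =>
    match u, v with
    | .inl u, .inl v => G₁.Adj u v
    | .inl u, .inr (i, _) => G₁.Adj u i
    | .inr (i, w), .inr (j, x) => i = j ∧ G₂.Adj w x
    | .inr _, .inl _ => False)

/-- The friendship graph `F n`: `n` triangles sharing the common vertex `none`. -/
def friendshipGraph (n : ℕ) : SimpleGraph (Option (Fin n × Fin 2)) :=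
  SimpleGraph.fromRel (fun u v => u = none ∨ u.map Prod.fst = v.map Prod.fst)

/-- The `r`-gluing of `G₁` and `G₂` along cliques `f₁ '' univ` and `f₂ '' univ`. -/
def rGlue {V₁ V₂ : Type*} (G₁ : SimpleGraph V₁) (G₂ : SimpleGraph V₂)
    {r : ℕ} (f₁ : Fin r → V₁) (f₂ : Fin r → V₂) :
    SimpleGraph (V₁ ⊕ {w : V₂ // w ∉ Set.range f₂}) :=
  SimpleGraph.fromRel (fun u v =>
    match u, v with
    | .inl u, .inl v => G₁.Adj u v
    | .inl u, .inr w => ∃ i, f₁ i = u ∧ G₂.Adj (f₂ i) w.1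
    | .inr w, .inr x => G₂.Adj w.1 x.1
    | .inr _, .inl _ => False)

lemma fg_adj_none_some {n : ℕ} (p : Fin n × Fin 2) :
    (friendshipGraph n).Adj none (some p) := by
  simp [friendshipGraph, SimpleGraph.fromRel_adj]

lemma fg_adj_some_some {n : ℕ} (p q : Fin n × Fin 2) :
    (friendshipGraph n).Adj (some p) (some q) ↔ p.1 = q.1 ∧ p.2 ≠ q.2 := by
  simp only [friendshipGraph, SimpleGraph.fromRel_adj, Option.map_some, ne_eq,
    Option.some.injEq, reduceCtorEq, false_or]
  constructor
  · rintro ⟨hne, h | h⟩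
    · exact ⟨h, fun h2 => hne (Prod.ext h h2)⟩
    · exact ⟨h.symm, fun h2 => hne (Prod.ext h.symm h2)⟩
  · rintro ⟨h1, h2⟩
    exact ⟨fun h => h2 (by rw [h]), Or.inl h1⟩

def fgColor (n : ℕ) : Option (Fin n × Fin 2) → Fin 3
  | none => 0
  | some p => p.2.succ

lemma tdChromatic_fg (n : ℕ) (hn : 1 ≤ n) : tdChromatic (friendshipGraph n) = 3 := by
  have hmem : 3 ∈ {k | ∃ c : Option (Fin n × Fin 2) → Fin k, IsTDColoring (friendshipGraph n) c} := by
    refine ⟨fgColor n, ?_, ?_⟩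
    · rintro (_ | p) (_ | q) hadj
      · exact absurd rfl hadj.ne
      · exact fun h => (Fin.succ_ne_zero q.2) h.symm
      · exact fun h => Fin.succ_ne_zero p.2 h
      · rw [fg_adj_some_some] at hadj
        exact fun h => hadj.2 (Fin.succ_inj.mp h)
    · rintro (_ | p)
      · refine ⟨fgColor n (some (⟨0, hn⟩, 0)), ⟨_, rfl⟩, ?_⟩
        rintro (_ | q) hq
        · exact absurd hq.symm (Fin.succ_ne_zero (0 : Fin 2))
        · exact fg_adj_none_some q
      · refine ⟨0, ⟨none, rfl⟩, ?_⟩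
        rintro (_ | q) hq
        · exact ((fg_adj_none_some p).symm)
        · exact absurd hq (Fin.succ_ne_zero _)
  have hlb : ∀ k ∈ {k | ∃ c : Option (Fin n × Fin 2) → Fin k, IsTDColoring (friendshipGraph n) c},
      3 ≤ k := by
    rintro k ⟨c, hc, _⟩
    by_contra hk
    push_neg at hk
    set a := c none
    set b := c (some (⟨0, hn⟩, 0))
    set d := c (some (⟨0, hn⟩, 1))
    have hab : a ≠ b := hc _ _ (fg_adj_none_some _)
    have had : a ≠ d := hc _ _ (fg_adj_none_some _)
    have hbd : b ≠ d := hc (some (⟨0, hn⟩, 0)) (some (⟨0, hn⟩, 1)) ((fg_adj_some_some _ _).mpr ⟨rfl, Fin.zero_ne_one⟩)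
    have h1 : a.val ≠ b.val := fun h => hab (Fin.ext h)
    have h2 : a.val ≠ d.val := fun h => had (Fin.ext h)
    have h3 : b.val ≠ d.val := fun h => hbd (Fin.ext h)
    have := a.isLt; have := b.isLt; have := d.isLt
    omega
  refine le_antisymm (Nat.sInf_le hmem) (hlb _ (Nat.sInf_mem ⟨3, hmem⟩))

abbrev outSet (n : ℕ) : Set (Option (Fin n × Fin 2)) :=
  {v | v ∉ ({none} : Finset (Option (Fin n × Fin 2)))}

def outEquiv (n : ℕ) : (outSet n) ≃ Fin n × Fin 2 where
  toFun w := match w with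
    | ⟨some p, _⟩ => p
    | ⟨none, h⟩ => absurd (Finset.mem_singleton_self none) h
  invFun p := ⟨some p, by simp [outSet]⟩
  left_inv := by rintro ⟨(_ | p), hw⟩; · exact absurd (Finset.mem_singleton_self none) hw
                 · rfl
  right_inv p := rfl

lemma outEquiv_coe {n : ℕ} (w : outSet n) : (w : Option (Fin n × Fin 2)) = some (outEquiv n w) := by
  rcases w with ⟨(_ | p), hw⟩
  · exact absurd (Finset.mem_singleton_self none) hw
  · rfl

noncomputable def G' (n : ℕ) : SimpleGraph (outSet n) := (friendshipGraph n).induce (outSet n)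

def partner (n : ℕ) (w : outSet n) : outSet n :=
  (outEquiv n).symm ((outEquiv n w).1, ⟨1 - ((outEquiv n w).2 : ℕ), by omega⟩)

lemma outEquiv_partner {n : ℕ} (w : outSet n) :
    outEquiv n (partner n w) = ((outEquiv n w).1, ⟨1 - ((outEquiv n w).2 : ℕ), by omega⟩) := by
  simp [partner]

lemma partner_partner {n : ℕ} (w : outSet n) : partner n (partner n w) = w := by
  have h := outEquiv_partner w
  apply (outEquiv n).injective
  rw [outEquiv_partner]; simp only [h]
  have h2 := ((outEquiv n) w).2.isLt
  exact Prod.ext rfl (Fin.ext (by simp; omega))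

lemma G'_adj_iff {n : ℕ} (w x : outSet n) : (G' n).Adj w x ↔ x = partner n w := by
  have hw := outEquiv_coe w
  have hx := outEquiv_coe x
  constructor
  · intro h
    have : (friendshipGraph n).Adj (w : Option (Fin n × Fin 2)) x := h
    rw [hw, hx, fg_adj_some_some] at this
    apply (outEquiv n).injective
    rw [outEquiv_partner]
    have h2 := ((outEquiv n) w).2.isLt
    have h3 := ((outEquiv n) x).2.isLt
    have h4 : ((outEquiv n x).2 : ℕ) ≠ ((outEquiv n w).2 : ℕ) :=
      fun h' => this.2.symm (Fin.ext h')
    exact Prod.ext this.1.symm (Fin.ext (by simp; omega))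
  · intro h
    subst h
    show (friendshipGraph n).Adj (w : Option (Fin n × Fin 2)) (partner n w)
    rw [hw, outEquiv_coe (partner n w), outEquiv_partner, fg_adj_some_some]
    refine ⟨rfl, ?_⟩
    have h2 := ((outEquiv n) w).2.isLt
    intro h'
    have := congrArg Fin.val h'
    simp at this
    omega

lemma tdChromatic_induced (n : ℕ) :
    tdChromatic (G' n) = n * 2 := by
  set E : (outSet n) ≃ Fin (n * 2) := (outEquiv n).trans finProdFinEquiv with hE
  have hmem : n * 2 ∈ {k | ∃ c : (outSet n) → Fin k, IsTDColoring (G' n) c} := by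
    refine ⟨fun w => E w, ?_, ?_⟩
    · intro u v hadj h
      exact hadj.ne (E.injective h)
    · intro w
      refine ⟨E (partner n w), ⟨partner n w, rfl⟩, fun x hx => ?_⟩
      rw [G'_adj_iff]
      exact E.injective hx
  have hlb : ∀ k ∈ {k | ∃ c : (outSet n) → Fin k, IsTDColoring (G' n) c}, n * 2 ≤ k := by
    rintro k ⟨c, hc1, hc2⟩
    choose f hf1 hf2 using hc2
    have hcp : ∀ w, c (partner n w) = f w := by
      intro w
      obtain ⟨x, hx⟩ := hf1 w
      have := (G'_adj_iff w x).mp (hf2 w x hx)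
      rw [← this, hx]
    have finj : Function.Injective f := by
      intro w w' h
      have : (G' n).Adj w' (partner n w) := hf2 w' _ (by rw [hcp w, h])
      rw [G'_adj_iff] at this
      have := congrArg (partner n) this
      rwa [partner_partner, partner_partner] at this
    calc n * 2 = Fintype.card (Fin (n * 2)) := (Fintype.card_fin _).symm
    _ ≤ k := by
        have : Function.Injective (f ∘ E.symm) := finj.comp E.symm.injective
        simpa using Fintype.card_le_of_injective _ this
  refine le_antisymm (Nat.sInf_le hmem) (hlb _ (Nat.sInf_mem ⟨_, hmem⟩))

theorem tdStability_friendshipGraph (n : ℕ) (hn : 2 ≤ n) :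
    tdStability (friendshipGraph n) = 1 := by
  have hmem : 1 ∈ {k | ∃ S : Finset (Option (Fin n × Fin 2)), S.card = k ∧ 0 < k ∧
      tdChromatic ((friendshipGraph n).induce {v | v ∉ S}) ≠ tdChromatic (friendshipGraph n)} := by
    refine ⟨{none}, Finset.card_singleton _, one_pos, ?_⟩
    have h2 : tdChromatic ((friendshipGraph n).induce
        {v | v ∉ ({none} : Finset (Option (Fin n × Fin 2)))}) = n * 2 := tdChromatic_induced n
    rw [h2, tdChromatic_fg n (by omega)]
    omega
  rw [tdStability]
  refine le_antisymm (Nat.sInf_le hmem) ?_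
  obtain ⟨S, hS, hk, -⟩ := Nat.sInf_mem (⟨1, hmem⟩ : Set.Nonempty _)
  exact hk
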